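/- Let u_1, ..., u_m be unit vectors in ℝⁿ with ∑_j c_j u_j ⊗ u_j = Id_{ℝⁿ} for some c_j ≥ 0, and let K. Ball's inequality hold in the form of Theorem 4.1 with D = 0: for any linear transformation T : ℝⁿ → ℝⁿ, |det T| ≤ ∏_{j=1}^m |T u_j|^{c_j}. -/

import Mathlib

open Real

/-- Ball's inequality: if unit vectors `u j` in `ℝⁿ` and `c j ≥ 0` satisfy
`∑ j, c j (u j ⊗ u j) = Id`, then for every linear map `T : ℝⁿ → ℝⁿ`,
`|det T| ≤ ∏ j, |T u j| ^ (c j)`. -/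
theorem ball_inequality {n m : ℕ}
    (u : Fin m → EuclideanSpace ℝ (Fin n)) (hu : ∀ j, ‖u j‖ = 1)
    (c : Fin m → ℝ) (hc : ∀ j, 0 ≤ c j)
    (hdecomp : ∀ x y : EuclideanSpace ℝ (Fin n),
      ∑ j, c j * ((inner ℝ x (u j) : ℝ) * (inner ℝ y (u j) : ℝ)) = (inner ℝ x y : ℝ))
    (T : EuclideanSpace ℝ (Fin n) →ₗ[ℝ] EuclideanSpace ℝ (Fin n)) :
    |LinearMap.det T| ≤ ∏ j, ‖T (u j)‖ ^ c j := by
  classical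
  have hn : Module.finrank ℝ (EuclideanSpace ℝ (Fin n)) = n := finrank_euclideanSpace_fin
  set S : EuclideanSpace ℝ (Fin n) →ₗ[ℝ] EuclideanSpace ℝ (Fin n) :=
    LinearMap.adjoint T * T with hSdef
  have hS : S.IsSymmetric := LinearMap.isSymmetric_adjoint_mul_self T
  set b := hS.eigenvectorBasis hn with hbdef
  set lam := hS.eigenvalues hn with hlamdef
  have hb : ∀ i, S (b i) = (lam i) • b i := fun i => hS.apply_eigenvectorBasis hn i
  have hbnorm : ∀ i, ‖b i‖ = 1 := fun i => b.orthonormal.1 i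
  have hSx : ∀ x, (inner ℝ (S x) x : ℝ) = ‖T x‖ ^ 2 := by
    intro x
    have h1 : (inner ℝ (S x) x : ℝ) = inner ℝ (T x) (T x) := by
      simp [hSdef, Module.End.mul_apply, LinearMap.adjoint_inner_left]
    rw [h1, real_inner_self_eq_norm_sq]
  have hlam : ∀ i, 0 ≤ lam i := by
    intro i
    have h1 : (inner ℝ (S (b i)) (b i) : ℝ) = lam i := by
      rw [hb i, real_inner_smul_left, real_inner_self_eq_norm_sq, hbnorm i]
      ring
    have h2 := hSx (b i)
    rw [h1] at h2
    rw [h2]; positivity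
  set w : Fin m → Fin n → ℝ := fun j i => (inner ℝ (b i) (u j) : ℝ) ^ 2 with hwdef
  have hw0 : ∀ j i, 0 ≤ w j i := fun j i => sq_nonneg _
  have hw1 : ∀ j, ∑ i, w j i = 1 := by
    intro j
    have h := b.sum_inner_mul_inner (u j) (u j)
    rw [real_inner_self_eq_norm_sq, hu j] at h
    simp only [one_pow] at h
    rw [← h]
    exact Finset.sum_congr rfl fun i _ => by
      rw [hwdef]; simp only; rw [real_inner_comm (b i) (u j)]; ring
  have hw2 : ∀ i, ∑ j, c j * w j i = 1 := by
    intro i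
    have h := hdecomp (b i) (b i)
    rw [real_inner_self_eq_norm_sq, hbnorm i] at h
    simp only [one_pow] at h
    rw [← h]
    exact Finset.sum_congr rfl fun j _ => by
      rw [hwdef]; simp only; ring
  have hw3 : ∀ j, ∑ i, w j i * lam i = ‖T (u j)‖ ^ 2 := by
    intro j
    rw [← hSx (u j), ← b.sum_inner_mul_inner (S (u j)) (u j)]
    refine Finset.sum_congr rfl fun i _ => ?_
    have h1 : (inner ℝ (S (u j)) (b i) : ℝ) = lam i * inner ℝ (u j) (b i) := by
      rw [hS (u j) (b i), hb i, real_inner_smul_right]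
    rw [h1, hwdef]; simp only; rw [real_inner_comm (b i) (u j)]
    ring
  have hdetS : LinearMap.det S = ∏ i, lam i := by
    rw [← LinearMap.det_toMatrix b.toBasis]
    have hM : LinearMap.toMatrix b.toBasis b.toBasis S = Matrix.diagonal lam := by
      ext i k
      rw [LinearMap.toMatrix_apply]
      simp only [OrthonormalBasis.coe_toBasis]
      rw [hb k]
      simp only [map_smul, OrthonormalBasis.coe_toBasis_repr_apply, OrthonormalBasis.repr_self]
      by_cases h : i = k
      · subst h; simp [Matrix.diagonal, EuclideanSpace.single_apply]
      · simp [Matrix.diagonal, h, EuclideanSpace.single_apply, Ne.symm h]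
    rw [hM, Matrix.det_diagonal]
  have hdetadj : LinearMap.det (LinearMap.adjoint T) = LinearMap.det T := by
    rw [← LinearMap.det_toMatrix b.toBasis, ← LinearMap.det_toMatrix b.toBasis T]
    rw [← Matrix.det_transpose (LinearMap.toMatrix b.toBasis b.toBasis T)]
    congr 1
    ext i k
    rw [Matrix.transpose_apply, LinearMap.toMatrix_apply, LinearMap.toMatrix_apply]
    simp only [OrthonormalBasis.coe_toBasis, OrthonormalBasis.coe_toBasis_repr_apply]
    rw [b.repr_apply_apply, b.repr_apply_apply]
    rw [LinearMap.adjoint_inner_right, real_inner_comm]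
  have hdetS2 : LinearMap.det S = (LinearMap.det T) ^ 2 := by
    rw [hSdef, Module.End.mul_eq_comp, LinearMap.det_comp, hdetadj]; ring
  have key : ∏ i, lam i ≤ ∏ j, (‖T (u j)‖ ^ 2) ^ (c j) := by
    calc ∏ i, lam i
        = ∏ i, lam i ^ (∑ j, c j * w j i) := by
          refine Finset.prod_congr rfl fun i _ => ?_
          rw [hw2 i, Real.rpow_one]
      _ = ∏ i, ∏ j, lam i ^ (c j * w j i) := by
          refine Finset.prod_congr rfl fun i _ => ?_
          exact Real.rpow_sum_of_nonneg (hlam i) (fun j _ => mul_nonneg (hc j) (hw0 j i))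
      _ = ∏ j, ∏ i, lam i ^ (c j * w j i) := Finset.prod_comm
      _ ≤ ∏ j, (‖T (u j)‖ ^ 2) ^ (c j) := by
          refine Finset.prod_le_prod (fun j _ => Finset.prod_nonneg fun i _ =>
            Real.rpow_nonneg (hlam i) _) (fun j _ => ?_)
          have h1 : ∏ i, lam i ^ (c j * w j i) = (∏ i, lam i ^ (w j i)) ^ (c j) := by
            rw [← Real.finset_prod_rpow _ _ (fun i _ => Real.rpow_nonneg (hlam i) _)]
            refine Finset.prod_congr rfl fun i _ => ?_
            rw [mul_comm, Real.rpow_mul (hlam i)]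
          rw [h1, ← hw3 j]
          refine Real.rpow_le_rpow (Finset.prod_nonneg fun i _ =>
            Real.rpow_nonneg (hlam i) _) ?_ (hc j)
          exact Real.geom_mean_le_arith_mean_weighted _ _ _ (fun i _ => hw0 j i)
            (hw1 j) (fun i _ => hlam i)
  have hsq : ∀ x : ℝ, 0 ≤ x → ∀ d : ℝ, (x ^ d) ^ 2 = (x ^ 2) ^ d := by
    intro x hx d
    rw [← Real.rpow_natCast (x ^ d) 2, ← Real.rpow_mul hx,
      show d * ((2:ℕ):ℝ) = ((2:ℕ):ℝ) * d from mul_comm _ _,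
      Real.rpow_mul hx, Real.rpow_natCast]
  have hRHS0 : 0 ≤ ∏ j, ‖T (u j)‖ ^ c j :=
    Finset.prod_nonneg fun j _ => Real.rpow_nonneg (norm_nonneg _) _
  have hfin : |LinearMap.det T| ^ 2 ≤ (∏ j, ‖T (u j)‖ ^ c j) ^ 2 := by
    rw [sq_abs, ← hdetS2, hdetS, ← Finset.prod_pow]
    calc ∏ i, lam i ≤ ∏ j, (‖T (u j)‖ ^ 2) ^ (c j) := key
      _ = ∏ j, (‖T (u j)‖ ^ c j) ^ 2 :=
        Finset.prod_congr rfl fun j _ => (hsq _ (norm_nonneg _) _).symm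
  exact (pow_le_pow_iff_left₀ (abs_nonneg _) hRHS0 two_ne_zero).mp hfin
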